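/- Let h₁ > 0. Then for all real h ≥ h₁ and all positive integers j, j', one has |(j·tanh(h·j))^{1/2} − (j'·tanh(h·j'))^{1/2}| ≥ c₁·|√j − √j'|, where c₁ := (tanh(h₁))^{1/2}. Equivalently, |ω_j(h) − ω_{j'}(h)| ≥ c₁ |j − j'| / (√j + √j'). -/
import Mathlib

lemma tanh_mono {x y : ℝ} (hxy : x ≤ y) : Real.tanh x ≤ Real.tanh y := by
  rw [Real.tanh_eq_sinh_div_cosh, Real.tanh_eq_sinh_div_cosh,
    div_le_div_iff₀ (Real.cosh_pos x) (Real.cosh_pos y)]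
  have h := Real.sinh_nonpos_iff.2 (sub_nonpos.2 hxy)
  rw [Real.sinh_sub] at h
  linarith

lemma tanh_pos' {x : ℝ} (hx : 0 < x) : 0 < Real.tanh x := by
  rw [Real.tanh_eq_sinh_div_cosh]
  exact div_pos (Real.sinh_pos_iff.2 hx) (Real.cosh_pos x)

lemma aux_bound (h₁ h : ℝ) (hh₁ : 0 < h₁) (hh : h₁ ≤ h) (j j' : ℕ)
    (hj' : 1 ≤ j') (hjj : j' ≤ j) :
    Real.sqrt (Real.tanh h₁) * (Real.sqrt j - Real.sqrt j') ≤
      Real.sqrt ((j : ℝ) * Real.tanh (h * (j : ℝ))) -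
        Real.sqrt ((j' : ℝ) * Real.tanh (h * (j' : ℝ))) := by
  have hj : 1 ≤ j := le_trans hj' hjj
  have hjr : (1 : ℝ) ≤ (j : ℝ) := by exact_mod_cast hj
  have hj'r : (1 : ℝ) ≤ (j' : ℝ) := by exact_mod_cast hj'
  have hjj'r : (j' : ℝ) ≤ (j : ℝ) := by exact_mod_cast hjj
  have h1 : h₁ ≤ h * (j' : ℝ) := le_trans hh (by nlinarith)
  have h2 : h * (j' : ℝ) ≤ h * (j : ℝ) := by nlinarith
  have t1 : Real.tanh h₁ ≤ Real.tanh (h * (j' : ℝ)) := tanh_mono h1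
  have t2 : Real.tanh (h * (j' : ℝ)) ≤ Real.tanh (h * (j : ℝ)) := tanh_mono h2
  rw [Real.sqrt_mul (by positivity), Real.sqrt_mul (by positivity)]
  have s1 : Real.sqrt (Real.tanh h₁) ≤ Real.sqrt (Real.tanh (h * (j' : ℝ))) :=
    Real.sqrt_le_sqrt t1
  have s2 : Real.sqrt (Real.tanh (h * (j' : ℝ))) ≤ Real.sqrt (Real.tanh (h * (j : ℝ))) :=
    Real.sqrt_le_sqrt t2
  have s3 : Real.sqrt (j' : ℝ) ≤ Real.sqrt (j : ℝ) := Real.sqrt_le_sqrt hjj'r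
  have n1 : 0 ≤ Real.sqrt (Real.tanh h₁) := Real.sqrt_nonneg _
  have n2 : 0 ≤ Real.sqrt (j' : ℝ) := Real.sqrt_nonneg _
  nlinarith [mul_nonneg n2 (sub_nonneg.2 s1),
    mul_nonneg (Real.sqrt_nonneg (j : ℝ)) (sub_nonneg.2 s2),
    mul_le_mul_of_nonneg_right s3 (sub_nonneg.2 s1)]

lemma aux_abs (h₁ h : ℝ) (hh₁ : 0 < h₁) (hh : h₁ ≤ h) (j j' : ℕ)
    (hj : 1 ≤ j) (hj' : 1 ≤ j') :
    Real.sqrt (Real.tanh h₁) * |Real.sqrt j - Real.sqrt j'| ≤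
      |Real.sqrt ((j : ℝ) * Real.tanh (h * (j : ℝ))) -
        Real.sqrt ((j' : ℝ) * Real.tanh (h * (j' : ℝ)))| := by
  rcases le_total j' j with hle | hle
  · have hb := aux_bound h₁ h hh₁ hh j j' hj' hle
    have hs : Real.sqrt (j' : ℝ) ≤ Real.sqrt (j : ℝ) :=
      Real.sqrt_le_sqrt (by exact_mod_cast hle)
    have hn : 0 ≤ Real.sqrt (Real.tanh h₁) := Real.sqrt_nonneg _
    rw [abs_of_nonneg (sub_nonneg.2 hs), abs_of_nonneg (by nlinarith)]
    exact hb
  · have hb := aux_bound h₁ h hh₁ hh j' j hj hle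
    have hs : Real.sqrt (j : ℝ) ≤ Real.sqrt (j' : ℝ) :=
      Real.sqrt_le_sqrt (by exact_mod_cast hle)
    have hn : 0 ≤ Real.sqrt (Real.tanh h₁) := Real.sqrt_nonneg _
    rw [abs_sub_comm (Real.sqrt (j:ℝ)),
      abs_sub_comm (Real.sqrt ((j:ℝ) * Real.tanh (h * (j:ℝ)))),
      abs_of_nonneg (sub_nonneg.2 hs), abs_of_nonneg (by nlinarith)]
    exact hb

/-- Lower bound on differences of linear frequencies:
|ω_j(h) − ω_{j'}(h)| ≥ c₁ |√j − √j'| = c₁ |j − j'|/(√j + √j'), with c₁ = √(tanh h₁),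
for all h ≥ h₁ and positive integers j, j'. -/
theorem freq_difference_lower_bound (h₁ : ℝ) (hh₁ : 0 < h₁) (h : ℝ) (hh : h₁ ≤ h)
    (j j' : ℕ) (hj : 1 ≤ j) (hj' : 1 ≤ j') :
    Real.sqrt (Real.tanh h₁) * |Real.sqrt j - Real.sqrt j'| ≤
      |Real.sqrt ((j : ℝ) * Real.tanh (h * (j : ℝ))) -
        Real.sqrt ((j' : ℝ) * Real.tanh (h * (j' : ℝ)))| ∧
    Real.sqrt (Real.tanh h₁) * (|(j : ℝ) - (j' : ℝ)| / (Real.sqrt j + Real.sqrt j')) ≤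
      |Real.sqrt ((j : ℝ) * Real.tanh (h * (j : ℝ))) -
        Real.sqrt ((j' : ℝ) * Real.tanh (h * (j' : ℝ)))| := by
  have key := aux_abs h₁ h hh₁ hh j j' hj hj'
  refine ⟨key, ?_⟩
  have heq : |(j : ℝ) - (j' : ℝ)| / (Real.sqrt j + Real.sqrt j') =
      |Real.sqrt j - Real.sqrt j'| := by
    have hpos : 0 < Real.sqrt (j : ℝ) + Real.sqrt (j' : ℝ) := by
      have : (0:ℝ) < Real.sqrt (j : ℝ) := Real.sqrt_pos.2 (by exact_mod_cast hj)
      positivity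
    rw [eq_comm, eq_div_iff (ne_of_gt hpos), ← abs_of_pos hpos, ← abs_mul]
    congr 1
    have hj2 : Real.sqrt (j:ℝ) * Real.sqrt (j:ℝ) = (j:ℝ) :=
      Real.mul_self_sqrt (by positivity)
    have hj'2 : Real.sqrt (j':ℝ) * Real.sqrt (j':ℝ) = (j':ℝ) :=
      Real.mul_self_sqrt (by positivity)
    ring_nf
    nlinarith
  rw [heq]
  exact key
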